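/- For any n×n complex matrix A and t ∈ ℝ, defining c(t²A) = Σ_{k≥0} (−1)^k (t²A)^k/(2k)! and s(t,A) = t·Σ_{k≥0} (−1)^k (t²A)^k/(2k+1)!, we have the double-angle identities c(4t²A) = 2·c(t²A)² − I and s(2t,A) = 2·s(t,A)·c(t²A). -/

import Mathlib

open Finset

private lemma interleave (g : ℕ → ℕ) (m : ℕ) :
    ∑ i ∈ range m, (g (2*i) + g (2*i+1)) = ∑ k ∈ range (2*m), g k := by
  induction m with
  | zero => simp
  | succ m ih =>
    rw [sum_range_succ, ih, show 2*(m+1) = (2*m+1)+1 by ring, sum_range_succ, sum_range_succ]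
    ring

private lemma sum_choose_even (m : ℕ) :
    ∑ i ∈ range (m+2), (2*m+2).choose (2*i) = 2^(2*m+1) := by
  rw [sum_range_succ']
  have h1 : ∀ i, (2*m+2).choose (2*(i+1))
      = (2*m+1).choose (2*i+1) + (2*m+1).choose (2*i+1+1) := by
    intro i
    rw [show 2*(i+1) = (2*i+1)+1 by ring, show 2*m+2 = (2*m+1)+1 by ring,
      Nat.choose_succ_succ]
  simp only [h1]
  have h2 := interleave (fun k => (2*m+1).choose (k+1)) (m+1)
  rw [h2]
  have h3 : ∑ k ∈ range (2*(m+1)), (2*m+1).choose (k+1)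
      = (∑ k ∈ range (2*(m+1)+1), (2*m+1).choose k) - 1 := by
    rw [sum_range_succ']
    simp
  rw [h3, show 2*(m+1)+1 = (2*m+1)+1+1 by ring, sum_range_succ,
    Nat.choose_succ_self, add_zero, Nat.sum_range_choose]
  have : 1 ≤ 2^(2*m+1) := Nat.one_le_two_pow
  simp [Nat.choose_zero_right]
  omega

private lemma sum_choose_odd (m : ℕ) :
    ∑ i ∈ range (m+1), (2*m+1).choose (2*i+1) = 4^m := by
  have h1 : ∀ i, (2*m+1).choose (2*i+1) = (2*m).choose (2*i) + (2*m).choose (2*i+1) := by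
    intro i
    rw [show 2*m+1 = (2*m)+1 by ring, Nat.choose_succ_succ]
  simp only [h1]
  rw [interleave (fun k => (2*m).choose k) (m+1), show 2*(m+1) = (2*m)+1+1 by ring,
    sum_range_succ, Nat.choose_succ_self, add_zero, Nat.sum_range_choose, pow_mul]
  norm_num

private lemma cCoeff (m : ℕ) :
    (2:ℂ) * ∑ p ∈ antidiagonal m,
        ((-1:ℂ)^p.1 / (2*p.1).factorial) * ((-1:ℂ)^p.2 / (2*p.2).factorial)
      = (-1:ℂ)^m * 4^m / (2*m).factorial + (if m = 0 then 1 else 0) := by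
  rw [Finset.Nat.sum_antidiagonal_eq_sum_range_succ_mk]
  have key : ∀ i ∈ range (m+1),
      ((-1:ℂ)^i / (2*i).factorial) * ((-1:ℂ)^(m-i) / (2*(m-i)).factorial)
        = ((-1:ℂ)^m / (2*m).factorial) * ((2*m).choose (2*i) : ℕ) := by
    intro i hi
    rw [mem_range] at hi
    have h2 : 2*i ≤ 2*m := by omega
    rw [Nat.cast_choose ℂ h2, show 2*m - 2*i = 2*(m-i) by omega]
    have f1 : ((2*i).factorial : ℂ) ≠ 0 := Nat.cast_ne_zero.2 (Nat.factorial_ne_zero _)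
    have f2 : ((2*(m-i)).factorial : ℂ) ≠ 0 := Nat.cast_ne_zero.2 (Nat.factorial_ne_zero _)
    have f3 : ((2*m).factorial : ℂ) ≠ 0 := Nat.cast_ne_zero.2 (Nat.factorial_ne_zero _)
    have hp : (-1:ℂ)^i * (-1:ℂ)^(m-i) = (-1:ℂ)^m := by
      rw [← pow_add, show i + (m-i) = m by omega]
    field_simp
    try rw [← hp]
    try ring
  rw [sum_congr rfl key, ← mul_sum]
  match m with
  | 0 => norm_num
  | Nat.succ k =>
    have hs : ∑ i ∈ range (k+1+1), (((2*(k+1)).choose (2*i) : ℕ) : ℂ)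
        = ((2:ℂ)^(2*k+1)) := by
      rw [← Nat.cast_sum]
      norm_cast
      rw [show 2*(k+1) = 2*k+2 by ring]
      exact sum_choose_even k
    rw [hs]
    have f3 : ((2*(k+1)).factorial : ℂ) ≠ 0 := Nat.cast_ne_zero.2 (Nat.factorial_ne_zero _)
    have h4 : (4:ℂ)^(k+1) = 2 * 2^(2*k+1) := by
      rw [show (4:ℂ) = 2^2 by norm_num, ← pow_mul, ← pow_succ']
      ring_nf
    simp only [Nat.succ_ne_zero, if_false, add_zero, h4]
    field_simp

private lemma sCoeff (m : ℕ) :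
    ∑ p ∈ antidiagonal m,
        ((-1:ℂ)^p.1 / (2*p.1+1).factorial) * ((-1:ℂ)^p.2 / (2*p.2).factorial)
      = (-1:ℂ)^m * 4^m / (2*m+1).factorial := by
  rw [Finset.Nat.sum_antidiagonal_eq_sum_range_succ_mk]
  have key : ∀ i ∈ range (m+1),
      ((-1:ℂ)^i / (2*i+1).factorial) * ((-1:ℂ)^(m-i) / (2*(m-i)).factorial)
        = ((-1:ℂ)^m / (2*m+1).factorial) * ((2*m+1).choose (2*i+1) : ℕ) := by
    intro i hi
    rw [mem_range] at hi
    have h2 : 2*i+1 ≤ 2*m+1 := by omega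
    rw [Nat.cast_choose ℂ h2, show 2*m+1 - (2*i+1) = 2*(m-i) by omega]
    have f1 : ((2*i+1).factorial : ℂ) ≠ 0 := Nat.cast_ne_zero.2 (Nat.factorial_ne_zero _)
    have f2 : ((2*(m-i)).factorial : ℂ) ≠ 0 := Nat.cast_ne_zero.2 (Nat.factorial_ne_zero _)
    have f3 : ((2*m+1).factorial : ℂ) ≠ 0 := Nat.cast_ne_zero.2 (Nat.factorial_ne_zero _)
    have hp : (-1:ℂ)^i * (-1:ℂ)^(m-i) = (-1:ℂ)^m := by
      rw [← pow_add, show i + (m-i) = m by omega]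
    field_simp
    try rw [← hp]
    try ring
  rw [sum_congr rfl key, ← mul_sum]
  have hs : ∑ i ∈ range (m+1), (((2*m+1).choose (2*i+1) : ℕ) : ℂ) = ((4:ℂ)^m) := by
    rw [← Nat.cast_sum, sum_choose_odd]
    norm_cast
  rw [hs]
  ring



/-- `c(t²A) = Σ_{k≥0} (-1)^k (t²A)^k/(2k)!`. -/
noncomputable def cFun {n : Type*} [Fintype n] [DecidableEq n] (t : ℝ) (A : Matrix n n ℂ) :
    Matrix n n ℂ :=
  ∑' k : ℕ, ((-1 : ℂ) ^ k / (2 * k).factorial) • (((t : ℂ) ^ 2) • A) ^ k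

/-- `s(t,A) = t Σ_{k≥0} (-1)^k (t²A)^k/(2k+1)!`. -/
noncomputable def sFun {n : Type*} [Fintype n] [DecidableEq n] (t : ℝ) (A : Matrix n n ℂ) :
    Matrix n n ℂ :=
  (t : ℂ) • ∑' k : ℕ, ((-1 : ℂ) ^ k / (2 * k + 1).factorial) • (((t : ℂ) ^ 2) • A) ^ k

open Finset

/-- Double-angle identities: `c(4t²A) = 2c(t²A)² - I` and `s(2t,A) = 2s(t,A)c(t²A)`. -/
theorem c_s_double_angle {n : Type*} [Fintype n] [DecidableEq n] (t : ℝ) (A : Matrix n n ℂ) :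
    cFun (2 * t) A = (2 : ℂ) • (cFun t A) ^ 2 - 1 ∧
    sFun (2 * t) A = (2 : ℂ) • (sFun t A * cFun t A) := by
  rcases isEmpty_or_nonempty n with h | h
  · constructor <;> · ext i j; exact isEmptyElim i
  letI : SeminormedRing (Matrix n n ℂ) := Matrix.linftyOpSemiNormedRing
  letI : NormedRing (Matrix n n ℂ) := Matrix.linftyOpNormedRing
  letI : NormedAlgebra ℂ (Matrix n n ℂ) := Matrix.linftyOpNormedAlgebra
  letI : NormOneClass (Matrix n n ℂ) := Matrix.linfty_opNormOneClass
  set X : Matrix n n ℂ := ((t:ℂ)^2) • A with hX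
  -- summability helper
  have hsum : ∀ (c : ℕ → ℂ) (M : ℝ), 0 ≤ M → (∀ k, ‖c k‖ ≤ M^k / k.factorial) →
      Summable fun k => ‖c k • X ^ k‖ := by
    intro c M hM hc
    refine Summable.of_nonneg_of_le (fun k => norm_nonneg _) (fun k => ?_)
      (Real.summable_pow_div_factorial (M * ‖X‖))
    rw [norm_smul]
    calc ‖c k‖ * ‖X ^ k‖ ≤ (M^k / k.factorial) * ‖X‖^k := by
          gcongr
          · exact hc k
          · exact norm_pow_le _ _
      _ = (M*‖X‖)^k / k.factorial := by rw [mul_pow]; ring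
  have hfac : ∀ N : ℕ, ∀ k : ℕ, ‖((-1:ℂ)^k / (N.factorial : ℂ))‖ = 1 / N.factorial := by
    intro N k
    rw [norm_div, norm_pow, norm_neg, norm_one, one_pow, Complex.norm_natCast]
  have ha : Summable fun k => ‖((-1:ℂ)^k / ((2*k).factorial : ℂ)) • X ^ k‖ := by
    refine hsum _ 1 zero_le_one fun k => ?_
    rw [hfac, one_pow]
    apply div_le_div_of_nonneg_left (by norm_num) (by positivity)
    exact_mod_cast Nat.factorial_le (by omega)
  have hb : Summable fun k => ‖((-1:ℂ)^k / ((2*k+1).factorial : ℂ)) • X ^ k‖ := by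
    refine hsum _ 1 zero_le_one fun k => ?_
    rw [show ((2*k+1).factorial : ℂ) = (((2*k+1).factorial : ℕ) : ℂ) by norm_num, hfac,
      one_pow]
    apply div_le_div_of_nonneg_left (by norm_num) (by positivity)
    exact_mod_cast Nat.factorial_le (by omega)
  have ha4 : Summable fun k => ‖((-1:ℂ)^k * 4^k / ((2*k).factorial : ℂ)) • X ^ k‖ := by
    refine hsum _ 4 (by norm_num) fun k => ?_
    rw [norm_div, norm_mul, norm_pow, norm_pow, norm_neg, norm_one, one_pow, one_mul,
      Complex.norm_natCast, show ‖(4:ℂ)‖ = (4:ℝ) by norm_num]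
    apply div_le_div_of_nonneg_left (by positivity) (by positivity)
    exact_mod_cast Nat.factorial_le (by omega)
  -- Cauchy products
  have cauchyCC := tsum_mul_tsum_eq_tsum_sum_antidiagonal_of_summable_norm ha ha
  have cauchySC := tsum_mul_tsum_eq_tsum_sum_antidiagonal_of_summable_norm hb ha
  have inner : ∀ (c d : ℕ → ℂ) (m : ℕ),
      ∑ p ∈ antidiagonal m, (c p.1 • X ^ p.1) * (d p.2 • X ^ p.2)
        = (∑ p ∈ antidiagonal m, c p.1 * d p.2) • X ^ m := by
    intro c d m
    rw [sum_smul]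
    refine sum_congr rfl fun p hp => ?_
    rw [smul_mul_smul_comm, ← pow_add, Finset.HasAntidiagonal.mem_antidiagonal.1 hp]
  -- rewrite cFun (2t) and sFun (2t)
  have h2t : (((2*t : ℝ) : ℂ))^2 • A = (4:ℂ) • X := by
    rw [hX, smul_smul]
    push_cast
    congr 1
    ring
  have hcoef : ∀ (ck : ℂ) (k : ℕ),
      ck • ((((2*t : ℝ) : ℂ))^2 • A) ^ k = (ck * 4^k) • X ^ k := by
    intro ck k
    rw [h2t, smul_pow, smul_smul]
  have innerCC : ∀ m : ℕ,
      (∑ p ∈ antidiagonal m, ((-1:ℂ)^p.1 / ((2*p.1).factorial : ℂ)) • X ^ p.1 *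
        (((-1:ℂ)^p.2 / ((2*p.2).factorial : ℂ)) • X ^ p.2))
      = (∑ p ∈ antidiagonal m, ((-1:ℂ)^p.1 / ((2*p.1).factorial : ℂ)) *
          ((-1:ℂ)^p.2 / ((2*p.2).factorial : ℂ))) • X ^ m :=
    fun m => inner (fun i => (-1:ℂ)^i / ((2*i).factorial : ℂ))
      (fun i => (-1:ℂ)^i / ((2*i).factorial : ℂ)) m
  have innerSC : ∀ m : ℕ,
      (∑ p ∈ antidiagonal m, ((-1:ℂ)^p.1 / ((2*p.1+1).factorial : ℂ)) • X ^ p.1 *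
        (((-1:ℂ)^p.2 / ((2*p.2).factorial : ℂ)) • X ^ p.2))
      = (∑ p ∈ antidiagonal m, ((-1:ℂ)^p.1 / ((2*p.1+1).factorial : ℂ)) *
          ((-1:ℂ)^p.2 / ((2*p.2).factorial : ℂ))) • X ^ m :=
    fun m => inner (fun i => (-1:ℂ)^i / ((2*i+1).factorial : ℂ))
      (fun i => (-1:ℂ)^i / ((2*i).factorial : ℂ)) m
  constructor
  · -- cosine identity
    have lhs : cFun (2*t) A = ∑' k : ℕ, ((-1:ℂ)^k * 4^k / ((2*k).factorial : ℂ)) • X ^ k := by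
      unfold cFun
      refine tsum_congr fun k => ?_
      rw [hcoef]
      congr 1
      ring
    have rhs : (2:ℂ) • (cFun t A)^2
        = ∑' m : ℕ, ((2:ℂ) * ∑ p ∈ antidiagonal m,
            ((-1:ℂ)^p.1 / ((2*p.1).factorial : ℂ)) * ((-1:ℂ)^p.2 / ((2*p.2).factorial : ℂ)))
          • X ^ m := by
      rw [sq]
      unfold cFun
      erw [cauchyCC]
      rw [← tsum_const_smul'' (2:ℂ)]
      refine tsum_congr fun m => ?_
      rw [innerCC, smul_smul]
    rw [lhs, rhs]
    rw [eq_sub_iff_add_eq, show (1 : Matrix n n ℂ)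
      = ∑' m : ℕ, (if m = 0 then (1 : Matrix n n ℂ) else 0) from (tsum_ite_eq 0 1).symm]
    erw [← Summable.tsum_add ha4.of_norm ((hasSum_ite_eq 0 (1 : Matrix n n ℂ)).summable)]
    refine tsum_congr fun m => ?_
    rw [cCoeff m, add_smul]
    congr 1
    by_cases hm : m = 0
    · subst hm; simp
    · simp [hm]
  · -- sine identity
    have lhs : sFun (2*t) A
        = (((2*t : ℝ)) : ℂ) • ∑' k : ℕ, ((-1:ℂ)^k * 4^k / ((2*k+1).factorial : ℂ)) • X ^ k := by
      unfold sFun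
      congr 1
      refine tsum_congr fun k => ?_
      rw [hcoef]
      congr 1
      ring
    have rhs : (2:ℂ) • (sFun t A * cFun t A)
        = ((2:ℂ) * t) • ((∑' k : ℕ, ((-1:ℂ)^k / ((2*k+1).factorial : ℂ)) • X ^ k) *
            ∑' k : ℕ, ((-1:ℂ)^k / ((2*k).factorial : ℂ)) • X ^ k) := by
      unfold sFun cFun
      rw [smul_mul_assoc, smul_smul]
    rw [lhs, rhs]
    erw [cauchySC]
    rw [show (((2*t : ℝ)) : ℂ) = (2:ℂ) * t by push_cast; ring]
    congr 1
    refine tsum_congr fun m => ?_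
    rw [innerSC, sCoeff m]
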